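/- Let Φ and Ψ be frames for H, m a semi-normalized symbol (0 < a ≤ |m_n| ≤ b < ∞), and suppose M_{m,Φ,Ψ} is invertible on H. Define Ψ† = (M_{m,Φ,Ψ}^{-1}(m_n φ_n)). Then Ψ† is the unique sequence F in H such that M_{m,Φ,Ψ}^{-1} = M_{1/m, F, Φ^d} for every dual frame Φ^d of Φ. -/

import Mathlib

open scoped ComplexConjugate ComplexInnerProductSpace

variable {H : Type*} [NormedAddCommGroup H] [InnerProductSpace ℂ H] [CompleteSpace H]

/-- `Φ` is a Bessel sequence in `H`. -/
def IsBessel (Φ : ℕ → H) : Prop :=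
  ∃ B : ℝ, 0 < B ∧ ∀ f : H, Summable (fun n => ‖⟪Φ n, f⟫‖ ^ 2) ∧
    ∑' n, ‖⟪Φ n, f⟫‖ ^ 2 ≤ B * ‖f‖ ^ 2

/-- `Φ` is a frame for `H`. -/
def IsFrame (Φ : ℕ → H) : Prop :=
  ∃ A B : ℝ, 0 < A ∧ 0 < B ∧ ∀ f : H, Summable (fun n => ‖⟪Φ n, f⟫‖ ^ 2) ∧
    A * ‖f‖ ^ 2 ≤ ∑' n, ‖⟪Φ n, f⟫‖ ^ 2 ∧ ∑' n, ‖⟪Φ n, f⟫‖ ^ 2 ≤ B * ‖f‖ ^ 2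

/-- `F` is a dual frame of the frame `Φ`:
`f = Σ ⟨f, Φ n⟩ F n = Σ ⟨f, F n⟩ Φ n` for all `f` (paper convention `⟨f, x⟩ = ⟪x, f⟫`). -/
def IsDualFrame (Φ F : ℕ → H) : Prop :=
  IsFrame F ∧ ∀ f : H, HasSum (fun n => ⟪Φ n, f⟫ • F n) f ∧ HasSum (fun n => ⟪F n, f⟫ • Φ n) f

/-- `F` is an analysis pseudo-dual of `Φ`: `f = Σ ⟨f, F n⟩ Φ n` for all `f`. -/
def IsAPseudoDual (Φ F : ℕ → H) : Prop := ∀ f : H, HasSum (fun n => ⟪F n, f⟫ • Φ n) f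

/-- `F` is a synthesis pseudo-dual of `Φ`: `f = Σ ⟨f, Φ n⟩ F n` for all `f`. -/
def IsSPseudoDual (Φ F : ℕ → H) : Prop := ∀ f : H, HasSum (fun n => ⟪Φ n, f⟫ • F n) f

/-- The frame operator `S_Φ f = Σ ⟨f, Φ n⟩ Φ n`. -/
noncomputable def frameOp (Φ : ℕ → H) (f : H) : H := ∑' n, ⟪Φ n, f⟫ • Φ n

/-- `m` is semi-normalized: `0 < a ≤ ‖m n‖ ≤ b < ∞`. -/
def SemiNormalized (m : ℕ → ℂ) : Prop := ∃ a b : ℝ, 0 < a ∧ ∀ n, a ≤ ‖m n‖ ∧ ‖m n‖ ≤ b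

/-! ### Auxiliary lemmas -/

/-- Cauchy–Schwarz for finsets, real, non-squared version. -/
lemma aux_finset_cs (s : Finset ℕ) (a b : ℕ → ℝ) (ha0 : ∀ n, 0 ≤ a n) (hb0 : ∀ n, 0 ≤ b n) :
    ∑ n ∈ s, a n * b n ≤ Real.sqrt (∑ n ∈ s, a n ^ 2) * Real.sqrt (∑ n ∈ s, b n ^ 2) := by
  have h0 : 0 ≤ ∑ n ∈ s, a n * b n := Finset.sum_nonneg fun n _ => mul_nonneg (ha0 n) (hb0 n)
  have h1 := Finset.sum_mul_sq_le_sq_mul_sq s a b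
  calc ∑ n ∈ s, a n * b n = Real.sqrt ((∑ n ∈ s, a n * b n) ^ 2) := (Real.sqrt_sq h0).symm
    _ ≤ Real.sqrt ((∑ n ∈ s, a n ^ 2) * ∑ n ∈ s, b n ^ 2) := Real.sqrt_le_sqrt h1
    _ = _ := Real.sqrt_mul (Finset.sum_nonneg fun n _ => sq_nonneg _) _

lemma aux_cs_summable {a b : ℕ → ℝ} (ha0 : ∀ n, 0 ≤ a n) (hb0 : ∀ n, 0 ≤ b n)
    (ha : Summable (fun n => a n ^ 2)) (hb : Summable (fun n => b n ^ 2)) :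
    Summable (fun n => a n * b n) := by
  refine Summable.of_nonneg_of_le (fun n => mul_nonneg (ha0 n) (hb0 n)) (fun n => ?_)
    ((ha.add hb).mul_left (1 / 2 : ℝ))
  nlinarith [sq_nonneg (a n - b n)]

lemma aux_cs_tsum {a b : ℕ → ℝ} (ha0 : ∀ n, 0 ≤ a n) (hb0 : ∀ n, 0 ≤ b n)
    (ha : Summable (fun n => a n ^ 2)) (hb : Summable (fun n => b n ^ 2)) :
    ∑' n, a n * b n ≤ Real.sqrt (∑' n, a n ^ 2) * Real.sqrt (∑' n, b n ^ 2) := by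
  refine Summable.tsum_le_of_sum_le (aux_cs_summable ha0 hb0 ha hb) (fun s => ?_)
  refine (aux_finset_cs s a b ha0 hb0).trans ?_
  gcongr
  · exact Summable.sum_le_tsum s (fun n _ => sq_nonneg _) ha
  · exact Summable.sum_le_tsum s (fun n _ => sq_nonneg _) hb

/-- Bessel bound for finite synthesis sums. -/
lemma aux_synth_finset_bound {Ψ : ℕ → H} {B : ℝ} (hB0 : 0 ≤ B)
    (hΨ : ∀ f : H, Summable (fun n => ‖⟪Ψ n, f⟫‖ ^ 2) ∧ ∑' n, ‖⟪Ψ n, f⟫‖ ^ 2 ≤ B * ‖f‖ ^ 2)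
    (c : ℕ → ℂ) (s : Finset ℕ) :
    ‖∑ n ∈ s, c n • Ψ n‖ ≤ Real.sqrt B * Real.sqrt (∑ n ∈ s, ‖c n‖ ^ 2) := by
  set g := ∑ n ∈ s, c n • Ψ n with hg
  by_cases hg0 : g = 0
  · rw [hg0]
    simp only [norm_zero]
    positivity
  have h1 : (⟪g, g⟫ : ℂ) = ∑ n ∈ s, conj (c n) * ⟪Ψ n, g⟫ := by
    rw [hg]
    rw [sum_inner]
    exact Finset.sum_congr rfl fun n _ => inner_smul_left _ _ _
  have h2 : ‖g‖ ^ 2 = ‖(⟪g, g⟫ : ℂ)‖ := by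
    rw [inner_self_eq_norm_sq_to_K (𝕜 := ℂ), norm_pow]
    simp
  have h3 : ‖(⟪g, g⟫ : ℂ)‖ ≤ ∑ n ∈ s, ‖c n‖ * ‖⟪Ψ n, g⟫‖ := by
    rw [h1]
    refine (norm_sum_le _ _).trans (Finset.sum_le_sum fun n _ => ?_)
    rw [norm_mul, RCLike.norm_conj]
  have h4 := aux_finset_cs s (fun n => ‖c n‖) (fun n => ‖⟪Ψ n, g⟫‖)
    (fun n => norm_nonneg _) (fun n => norm_nonneg _)
  have h5 : ∑ n ∈ s, ‖⟪Ψ n, g⟫‖ ^ 2 ≤ B * ‖g‖ ^ 2 :=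
    (Summable.sum_le_tsum s (fun n _ => sq_nonneg _) (hΨ g).1).trans (hΨ g).2
  have h6 : Real.sqrt (∑ n ∈ s, ‖⟪Ψ n, g⟫‖ ^ 2) ≤ Real.sqrt B * ‖g‖ := by
    refine (Real.sqrt_le_sqrt h5).trans ?_
    rw [Real.sqrt_mul hB0, Real.sqrt_sq (norm_nonneg _)]
  have hgn : 0 < ‖g‖ := norm_pos_iff.mpr hg0
  have hkey : ‖g‖ ^ 2 ≤ Real.sqrt (∑ n ∈ s, ‖c n‖ ^ 2) * (Real.sqrt B * ‖g‖) := by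
    calc ‖g‖ ^ 2 = ‖(⟪g, g⟫ : ℂ)‖ := h2
      _ ≤ ∑ n ∈ s, ‖c n‖ * ‖⟪Ψ n, g⟫‖ := h3
      _ ≤ Real.sqrt (∑ n ∈ s, ‖c n‖ ^ 2) * Real.sqrt (∑ n ∈ s, ‖⟪Ψ n, g⟫‖ ^ 2) := h4
      _ ≤ Real.sqrt (∑ n ∈ s, ‖c n‖ ^ 2) * (Real.sqrt B * ‖g‖) := by
          exact mul_le_mul_of_nonneg_left h6 (Real.sqrt_nonneg _)
  nlinarith [Real.sqrt_nonneg (∑ n ∈ s, ‖c n‖ ^ 2), Real.sqrt_nonneg B]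

/-- Synthesis with `ℓ²` coefficients of a Bessel sequence converges. -/
lemma aux_synth_summable {Ψ : ℕ → H} {B : ℝ} (hB0 : 0 ≤ B)
    (hΨ : ∀ f : H, Summable (fun n => ‖⟪Ψ n, f⟫‖ ^ 2) ∧ ∑' n, ‖⟪Ψ n, f⟫‖ ^ 2 ≤ B * ‖f‖ ^ 2)
    {c : ℕ → ℂ} (hc : Summable (fun n => ‖c n‖ ^ 2)) :
    Summable (fun n => c n • Ψ n) := by
  rw [summable_iff_vanishing_norm]
  intro ε hε
  set δ : ℝ := (ε / 2 / (Real.sqrt B + 1)) ^ 2 with hδ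
  have hsB : (0:ℝ) < Real.sqrt B + 1 := by positivity
  have hδ0 : 0 < δ := by positivity
  obtain ⟨s, hs⟩ := summable_iff_vanishing_norm.mp hc δ hδ0
  refine ⟨s, fun t ht => ?_⟩
  have h1 : ∑ n ∈ t, ‖c n‖ ^ 2 < δ := by
    have := hs t ht
    calc ∑ n ∈ t, ‖c n‖ ^ 2 ≤ |∑ n ∈ t, ‖c n‖ ^ 2| := le_abs_self _
      _ = ‖∑ n ∈ t, ‖c n‖ ^ 2‖ := (Real.norm_eq_abs _).symm
      _ < δ := this
  have h2 : Real.sqrt (∑ n ∈ t, ‖c n‖ ^ 2) < ε / 2 / (Real.sqrt B + 1) := by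
    rw [hδ] at h1
    have := Real.sqrt_lt_sqrt (Finset.sum_nonneg fun n _ => sq_nonneg _) h1
    rwa [Real.sqrt_sq (by positivity)] at this
  calc ‖∑ n ∈ t, c n • Ψ n‖ ≤ Real.sqrt B * Real.sqrt (∑ n ∈ t, ‖c n‖ ^ 2) :=
        aux_synth_finset_bound hB0 hΨ c t
    _ ≤ (Real.sqrt B + 1) * Real.sqrt (∑ n ∈ t, ‖c n‖ ^ 2) := by
        have := Real.sqrt_nonneg (∑ n ∈ t, ‖c n‖ ^ 2)
        nlinarith [Real.sqrt_nonneg B]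
    _ < (Real.sqrt B + 1) * (ε / 2 / (Real.sqrt B + 1)) := by
        exact mul_lt_mul_of_pos_left h2 hsB
    _ = ε / 2 := by field_simp
    _ < ε := by linarith

/-- Lower frame bound for any analysis pseudo-dual of a Bessel sequence. -/
lemma aux_dual_lower {Φ F : ℕ → H} {B : ℝ} (hB : 0 < B)
    (hΦ : ∀ f : H, Summable (fun n => ‖⟪Φ n, f⟫‖ ^ 2) ∧ ∑' n, ‖⟪Φ n, f⟫‖ ^ 2 ≤ B * ‖f‖ ^ 2)
    {f : H} (hFs : Summable (fun n => ‖⟪F n, f⟫‖ ^ 2))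
    (hd : HasSum (fun n => ⟪F n, f⟫ • Φ n) f) :
    B⁻¹ * ‖f‖ ^ 2 ≤ ∑' n, ‖⟪F n, f⟫‖ ^ 2 := by
  by_cases hf0 : f = 0
  · rw [hf0]
    simp only [norm_zero]
    have : 0 ≤ ∑' n, ‖⟪F n, (0:H)⟫‖ ^ 2 := tsum_nonneg (fun n => sq_nonneg ‖⟪F n, (0:H)⟫‖)
    simpa using this
  have h1 : HasSum (fun n => ⟪F n, f⟫ * ⟪f, Φ n⟫) ⟪f, f⟫ := by
    have := (innerSL ℂ f).hasSum hd
    simpa [inner_smul_right] using this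
  have hsummn : Summable (fun n => ‖⟪F n, f⟫‖ * ‖⟪Φ n, f⟫‖) :=
    aux_cs_summable (fun n => norm_nonneg _) (fun n => norm_nonneg _) hFs (hΦ f).1
  have h2 : ‖f‖ ^ 2 = ‖(⟪f, f⟫ : ℂ)‖ := by
    rw [inner_self_eq_norm_sq_to_K (𝕜 := ℂ), norm_pow]
    simp
  have h3 : ‖(⟪f, f⟫ : ℂ)‖ ≤ ∑' n, ‖⟪F n, f⟫‖ * ‖⟪Φ n, f⟫‖ := by
    rw [← h1.tsum_eq]
    refine (norm_tsum_le_tsum_norm ?_).trans ?_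
    · refine hsummn.congr fun n => ?_
      rw [norm_mul, norm_inner_symm f (Φ n)]
    · refine le_of_eq (tsum_congr fun n => ?_)
      rw [norm_mul, norm_inner_symm f (Φ n)]
  have h4 := aux_cs_tsum (a := fun n => ‖⟪F n, f⟫‖) (b := fun n => ‖⟪Φ n, f⟫‖)
    (fun n => norm_nonneg _) (fun n => norm_nonneg _) hFs (hΦ f).1
  have h5 : Real.sqrt (∑' n, ‖⟪Φ n, f⟫‖ ^ 2) ≤ Real.sqrt B * ‖f‖ := by
    refine (Real.sqrt_le_sqrt (hΦ f).2).trans ?_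
    rw [Real.sqrt_mul hB.le, Real.sqrt_sq (norm_nonneg _)]
  have hfn : 0 < ‖f‖ := norm_pos_iff.mpr hf0
  set S : ℝ := ∑' n, ‖⟪F n, f⟫‖ ^ 2 with hS
  have hS0 : 0 ≤ S := tsum_nonneg fun n => sq_nonneg _
  have hkey : ‖f‖ ^ 2 ≤ Real.sqrt S * (Real.sqrt B * ‖f‖) := by
    calc ‖f‖ ^ 2 = ‖(⟪f, f⟫ : ℂ)‖ := h2
      _ ≤ ∑' n, ‖⟪F n, f⟫‖ * ‖⟪Φ n, f⟫‖ := h3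
      _ ≤ Real.sqrt S * Real.sqrt (∑' n, ‖⟪Φ n, f⟫‖ ^ 2) := h4
      _ ≤ Real.sqrt S * (Real.sqrt B * ‖f‖) := by
          exact mul_le_mul_of_nonneg_left h5 (Real.sqrt_nonneg _)
  have hfS : ‖f‖ ≤ Real.sqrt S * Real.sqrt B := by
    nlinarith [Real.sqrt_nonneg S, Real.sqrt_nonneg B]
  have hsq : ‖f‖ ^ 2 ≤ S * B := by
    have := mul_self_le_mul_self (norm_nonneg f) hfS
    have hSB : Real.sqrt S * Real.sqrt B * (Real.sqrt S * Real.sqrt B) = S * B := by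
      rw [← Real.sqrt_mul hS0, Real.mul_self_sqrt (mul_nonneg hS0 hB.le)]
    nlinarith
  rw [inv_mul_le_iff₀ hB]
  linarith [hsq]

lemma aux_norm_add_sq (x y : ℂ) : ‖x + y‖ ^ 2 ≤ 2 * ‖x‖ ^ 2 + 2 * ‖y‖ ^ 2 := by
  have h := norm_add_le x y
  have h2 := mul_self_le_mul_self (norm_nonneg (x + y)) h
  nlinarith [sq_nonneg (‖x‖ - ‖y‖)]

lemma aux_norm_sub_sq (x y : ℂ) : ‖x - y‖ ^ 2 ≤ 2 * ‖x‖ ^ 2 + 2 * ‖y‖ ^ 2 := by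
  have h := norm_sub_le x y
  have h2 := mul_self_le_mul_self (norm_nonneg (x - y)) h
  nlinarith [sq_nonneg (‖x‖ - ‖y‖)]

set_option maxHeartbeats 1000000 in
theorem stmt2 (Φ Ψ : ℕ → H) (m : ℕ → ℂ) (hΦ : IsFrame Φ) (hΨ : IsFrame Ψ)
    (hm : SemiNormalized m) (M N : H →L[ℂ] H)
    (hM : ∀ f : H, HasSum (fun n => (m n * ⟪Ψ n, f⟫) • Φ n) (M f))
    (hNM : ∀ f : H, N (M f) = f) (hMN : ∀ f : H, M (N f) = f) :
    ∀ F : ℕ → H,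
      (∀ Φd : ℕ → H, IsDualFrame Φ Φd → ∀ f : H,
        HasSum (fun n => ((m n)⁻¹ * ⟪Φd n, f⟫) • F n) (N f))
      ↔ F = fun n => N (m n • Φ n) := by
  classical
  obtain ⟨a, b, ha, hab⟩ := hm
  have hmne : ∀ n, m n ≠ 0 := by
    intro n hn
    have := (hab n).1
    rw [hn, norm_zero] at this
    linarith
  have hb0 : 0 < b := lt_of_lt_of_le ha ((hab 0).1.trans (hab 0).2)
  obtain ⟨AΨ, BΨ, hAΨ, hBΨ, hΨ'⟩ := hΨ
  obtain ⟨AΦ, BΦ, hAΦ, hBΦ, hΦ'⟩ := hΦ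
  have hΦB : ∀ f : H, Summable (fun n => ‖⟪Φ n, f⟫‖ ^ 2) ∧
      ∑' n, ‖⟪Φ n, f⟫‖ ^ 2 ≤ BΦ * ‖f‖ ^ 2 := fun f => ⟨(hΦ' f).1, (hΦ' f).2.2⟩
  have hΨB : ∀ f : H, Summable (fun n => ‖⟪Ψ n, f⟫‖ ^ 2) ∧
      ∑' n, ‖⟪Ψ n, f⟫‖ ^ 2 ≤ BΨ * ‖f‖ ^ 2 := fun f => ⟨(hΨ' f).1, (hΨ' f).2.2⟩
  -- the distinguished dual frame of Φ
  set Φd0 : ℕ → H := fun n => conj (m n) • (ContinuousLinearMap.adjoint N) (Ψ n) with hΦd0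
  have key0 : ∀ (n : ℕ) (f : H), ⟪Φd0 n, f⟫ = m n * ⟪Ψ n, N f⟫ := by
    intro n f
    simp [hΦd0, inner_smul_left, ContinuousLinearMap.adjoint_inner_left]
    ring
  -- `m`-weighted analysis coefficients: summability and bound
  have hmp : ∀ h : H, Summable (fun n => ‖m n * ⟪Ψ n, h⟫‖ ^ 2) := by
    intro h
    refine Summable.of_nonneg_of_le (fun n => sq_nonneg _) (fun n => ?_)
      (((hΨB h).1).mul_left (b ^ 2))
    rw [norm_mul, mul_pow]
    have h1 : ‖m n‖ ^ 2 ≤ b ^ 2 := by nlinarith [(hab n).1, (hab n).2, norm_nonneg (m n)]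
    nlinarith [sq_nonneg ‖⟪Ψ n, h⟫‖]
  have hmpt : ∀ h : H, ∑' n, ‖m n * ⟪Ψ n, h⟫‖ ^ 2 ≤ b ^ 2 * BΨ * ‖h‖ ^ 2 := by
    intro h
    have h1 : ∑' n, ‖m n * ⟪Ψ n, h⟫‖ ^ 2 ≤ ∑' n, b ^ 2 * ‖⟪Ψ n, h⟫‖ ^ 2 := by
      refine Summable.tsum_le_tsum (fun n => ?_) (hmp h) (((hΨB h).1).mul_left (b ^ 2))
      rw [norm_mul, mul_pow]
      have h1 : ‖m n‖ ^ 2 ≤ b ^ 2 := by nlinarith [(hab n).1, (hab n).2, norm_nonneg (m n)]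
      nlinarith [sq_nonneg ‖⟪Ψ n, h⟫‖]
    rw [tsum_mul_left] at h1
    refine h1.trans ?_
    rw [mul_assoc]
    exact mul_le_mul_of_nonneg_left (hΨB h).2 (by positivity)
  -- duality (analysis side) of Φd0
  have duality2_0 : ∀ f : H, HasSum (fun n => ⟪Φd0 n, f⟫ • Φ n) f := by
    intro f
    have h := hM (N f)
    rw [hMN] at h
    simp only [key0]
    exact h
  -- `M ∘ N = id`, `N ∘ M = id` as operators; adjoints
  have hcompMN : M.comp N = ContinuousLinearMap.id ℂ H := ContinuousLinearMap.ext hMN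
  have hadj : ∀ y : H,
      (ContinuousLinearMap.adjoint N) ((ContinuousLinearMap.adjoint M) y) = y := by
    intro y
    have h1 : (ContinuousLinearMap.adjoint N).comp (ContinuousLinearMap.adjoint M)
        = ContinuousLinearMap.id ℂ H := by
      rw [← ContinuousLinearMap.adjoint_comp, hcompMN, ContinuousLinearMap.adjoint_id]
    calc (ContinuousLinearMap.adjoint N) ((ContinuousLinearMap.adjoint M) y)
        = ((ContinuousLinearMap.adjoint N).comp (ContinuousLinearMap.adjoint M)) y := rfl
      _ = y := by rw [h1]; rfl
  -- duality (synthesis side) of Φd0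
  have duality1_0 : ∀ f : H, HasSum (fun n => ⟪Φ n, f⟫ • Φd0 n) f := by
    intro f
    set c : ℕ → ℂ := fun n => conj (m n) * ⟪Φ n, f⟫ with hc
    have hcs : Summable (fun n => ‖c n‖ ^ 2) := by
      refine Summable.of_nonneg_of_le (fun n => sq_nonneg _) (fun n => ?_)
        (((hΦB f).1).mul_left (b ^ 2))
      rw [hc]
      simp only [norm_mul, RCLike.norm_conj, mul_pow]
      have h1 : ‖m n‖ ^ 2 ≤ b ^ 2 := by nlinarith [(hab n).1, (hab n).2, norm_nonneg (m n)]
      nlinarith [sq_nonneg ‖⟪Φ n, f⟫‖]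
    obtain ⟨x, hx⟩ := aux_synth_summable hBΨ.le hΨB hcs
    have hxMf : x = (ContinuousLinearMap.adjoint M) f := by
      refine ext_inner_left ℂ fun g => ?_
      have h1 : HasSum (fun n => c n * ⟪g, Ψ n⟫) ⟪g, x⟫ := by
        have := (innerSL ℂ g).hasSum hx
        simpa [inner_smul_right] using this
      have h2 : HasSum (fun n => (m n * ⟪Ψ n, g⟫) * ⟪f, Φ n⟫) ⟪f, M g⟫ := by
        have := (innerSL ℂ f).hasSum (hM g)
        simpa [inner_smul_right] using this
      have h3 : HasSum (fun n => c n * ⟪g, Ψ n⟫) (conj ⟪f, M g⟫) := by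
        have h4 := h2.star
        refine h4.congr_fun fun n => ?_
        simp only [star_mul']
        rw [hc]
        simp only [← starRingEnd_apply, inner_conj_symm]
        ring
      have h5 : ⟪g, x⟫ = conj ⟪f, M g⟫ := h1.unique h3
      rw [h5, ContinuousLinearMap.adjoint_inner_right]
      exact inner_conj_symm (M g) f
    have hterm : ∀ n, ⟪Φ n, f⟫ • Φd0 n
        = (ContinuousLinearMap.adjoint N) (c n • Ψ n) := by
      intro n
      simp only [hΦd0, hc, map_smul, smul_smul]
      rw [mul_comm]
    have h6 := (ContinuousLinearMap.adjoint N).hasSum hx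
    rw [hxMf, hadj] at h6
    exact (h6.congr_fun fun n => hterm n)
  -- frame bounds for Φd0
  have hΦd0sum : ∀ f : H, Summable (fun n => ‖⟪Φd0 n, f⟫‖ ^ 2) := by
    intro f
    simp only [key0]
    exact hmp (N f)
  have hΦd0upper : ∀ f : H, ∑' n, ‖⟪Φd0 n, f⟫‖ ^ 2
      ≤ (b ^ 2 * BΨ * (‖N‖ + 1) ^ 2) * ‖f‖ ^ 2 := by
    intro f
    have h1 : ∑' n, ‖⟪Φd0 n, f⟫‖ ^ 2 = ∑' n, ‖m n * ⟪Ψ n, N f⟫‖ ^ 2 := by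
      exact tsum_congr fun n => by rw [key0]
    rw [h1]
    refine (hmpt (N f)).trans ?_
    have h2 : ‖N f‖ ≤ (‖N‖ + 1) * ‖f‖ := by
      refine (N.le_opNorm f).trans ?_
      nlinarith [norm_nonneg f, norm_nonneg (N f)]
    have h3 : ‖N f‖ ^ 2 ≤ (‖N‖ + 1) ^ 2 * ‖f‖ ^ 2 := by
      nlinarith [norm_nonneg (N f), norm_nonneg f, N.opNorm_nonneg]
    have h4 := mul_le_mul_of_nonneg_left h3 (show (0:ℝ) ≤ b ^ 2 * BΨ by positivity)
    nlinarith [h4]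
  have hframe0 : IsFrame Φd0 := by
    refine ⟨BΦ⁻¹, b ^ 2 * BΨ * (‖N‖ + 1) ^ 2 + 1, by positivity, ?_, fun f => ?_⟩
    · have : (0:ℝ) ≤ b ^ 2 * BΨ * (‖N‖ + 1) ^ 2 := by positivity
      linarith
    refine ⟨hΦd0sum f, aux_dual_lower hBΦ hΦB (hΦd0sum f) (duality2_0 f), ?_⟩
    refine (hΦd0upper f).trans ?_
    nlinarith [sq_nonneg ‖f‖]
  have hdual0 : IsDualFrame Φ Φd0 := ⟨hframe0, fun f => ⟨duality1_0 f, duality2_0 f⟩⟩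
  intro F
  constructor
  · -- forward direction
    intro hyp
    funext k
    rcases subsingleton_or_nontrivial H with hH | hH
    · exact Subsingleton.elim _ _
    obtain ⟨w, hw⟩ := exists_ne (0 : H)
    set g : H := N (Φ k) with hgdef
    set u : ℕ → ℂ := fun n => (if n = k then 1 else 0) - m n * ⟪Ψ n, g⟫ with hu
    have hdeltasum : Summable (fun n => ‖(if n = k then (1:ℂ) else 0)‖ ^ 2) := by
      refine summable_of_ne_finset_zero (s := {k}) fun n hn => ?_
      simp only [Finset.mem_singleton] at hn
      simp [hn]
    have hus : Summable (fun n => ‖u n‖ ^ 2) := by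
      refine Summable.of_nonneg_of_le (fun n => sq_nonneg _) (fun n => ?_)
        ((hdeltasum.mul_left 2).add ((hmp g).mul_left 2))
      rw [hu]
      have h1 := aux_norm_sub_sq (if n = k then (1:ℂ) else 0) (m n * ⟪Ψ n, g⟫)
      linarith
    have hu0 : HasSum (fun n => u n • Φ n) 0 := by
      have h1 : HasSum (fun n => (if n = k then (1:ℂ) else 0) • Φ n) (Φ k) := by
        have h2 : (fun n => (if n = k then (1:ℂ) else 0) • Φ n)
            = fun n => if n = k then Φ k else 0 := by
          funext n
          by_cases hn : n = k
          · subst hn; simp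
          · simp [hn]
        rw [h2]
        exact hasSum_ite_eq k (Φ k)
      have h2 : HasSum (fun n => (m n * ⟪Ψ n, g⟫) • Φ n) (Φ k) := by
        have := hM g
        rwa [hgdef, hMN] at this
      have h3 := h1.sub h2
      rw [sub_self] at h3
      refine h3.congr_fun fun n => ?_
      rw [hu, sub_smul]
    have hscal : ∀ f : H, HasSum (fun n => u n * ⟪f, Φ n⟫) 0 := by
      intro f
      have := (innerSL ℂ f).hasSum hu0
      simpa [inner_smul_right] using this
    have hscal' : ∀ f : H, HasSum (fun n => conj (u n) * ⟪Φ n, f⟫) 0 := by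
      intro f
      have h1 := (hscal f).star
      simp only [star_zero] at h1
      refine h1.congr_fun fun n => ?_
      simp only [← starRingEnd_apply]
      rw [map_mul, inner_conj_symm]
    -- the perturbed dual frame
    set Φd1 : ℕ → H := fun n => Φd0 n + conj (u n) • w with hΦd1
    have key1 : ∀ (n : ℕ) (f : H), ⟪Φd1 n, f⟫ = m n * ⟪Ψ n, N f⟫ + u n * ⟪w, f⟫ := by
      intro n f
      rw [hΦd1]
      simp only [inner_add_left, inner_smul_left, RingHomCompTriple.comp_apply]
      rw [key0]
      simp
    have hΦd1sum : ∀ f : H, Summable (fun n => ‖⟪Φd1 n, f⟫‖ ^ 2) := by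
      intro f
      simp only [key1]
      refine Summable.of_nonneg_of_le (fun n => sq_nonneg _) (fun n => ?_)
        (((hmp (N f)).mul_left 2).add
          ((hus.mul_right (‖⟪w, f⟫‖ ^ 2)).mul_left 2))
      have h1 := aux_norm_add_sq (m n * ⟪Ψ n, N f⟫) (u n * ⟪w, f⟫)
      have h2 : ‖u n * ⟪w, f⟫‖ ^ 2 = ‖u n‖ ^ 2 * ‖⟪w, f⟫‖ ^ 2 := by
        rw [norm_mul, mul_pow]
      linarith
    have hΦd1upper : ∀ f : H, ∑' n, ‖⟪Φd1 n, f⟫‖ ^ 2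
        ≤ (2 * (b ^ 2 * BΨ * (‖N‖ + 1) ^ 2) + 2 * (∑' n, ‖u n‖ ^ 2) * ‖w‖ ^ 2 + 1)
          * ‖f‖ ^ 2 := by
      intro f
      have hsum1 : Summable (fun n => 2 * ‖m n * ⟪Ψ n, N f⟫‖ ^ 2 + 2 * (‖u n‖ ^ 2 * ‖⟪w, f⟫‖ ^ 2)) :=
        ((hmp (N f)).mul_left 2).add (((hus.mul_right (‖⟪w, f⟫‖ ^ 2)).mul_left 2))
      have h1 : ∑' n, ‖⟪Φd1 n, f⟫‖ ^ 2
          ≤ ∑' n, (2 * ‖m n * ⟪Ψ n, N f⟫‖ ^ 2 + 2 * (‖u n‖ ^ 2 * ‖⟪w, f⟫‖ ^ 2)) := by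
        refine Summable.tsum_le_tsum (fun n => ?_) (hΦd1sum f) hsum1
        rw [key1]
        have hle := aux_norm_add_sq (m n * ⟪Ψ n, N f⟫) (u n * ⟪w, f⟫)
        have h2 : ‖u n * ⟪w, f⟫‖ ^ 2 = ‖u n‖ ^ 2 * ‖⟪w, f⟫‖ ^ 2 := by
          rw [norm_mul, mul_pow]
        linarith
      have h2 : ∑' n, (2 * ‖m n * ⟪Ψ n, N f⟫‖ ^ 2 + 2 * (‖u n‖ ^ 2 * ‖⟪w, f⟫‖ ^ 2))
          = 2 * (∑' n, ‖m n * ⟪Ψ n, N f⟫‖ ^ 2) + 2 * ((∑' n, ‖u n‖ ^ 2) * ‖⟪w, f⟫‖ ^ 2) := by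
        rw [Summable.tsum_add ((hmp (N f)).mul_left 2) ((hus.mul_right (‖⟪w, f⟫‖ ^ 2)).mul_left 2)]
        rw [tsum_mul_left, tsum_mul_left, tsum_mul_right]
      have h3 : ∑' n, ‖m n * ⟪Ψ n, N f⟫‖ ^ 2 ≤ (b ^ 2 * BΨ * (‖N‖ + 1) ^ 2) * ‖f‖ ^ 2 := by
        refine (hmpt (N f)).trans ?_
        have h4 : ‖N f‖ ≤ (‖N‖ + 1) * ‖f‖ := by
          refine (N.le_opNorm f).trans ?_
          nlinarith [norm_nonneg f]
        have h6 : ‖N f‖ ^ 2 ≤ (‖N‖ + 1) ^ 2 * ‖f‖ ^ 2 := by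
          nlinarith [norm_nonneg (N f), norm_nonneg f, N.opNorm_nonneg]
        have h7 := mul_le_mul_of_nonneg_left h6 (show (0:ℝ) ≤ b ^ 2 * BΨ by positivity)
        nlinarith [h7]
      have h5 : ‖⟪w, f⟫‖ ^ 2 ≤ ‖w‖ ^ 2 * ‖f‖ ^ 2 := by
        have := norm_inner_le_norm (𝕜 := ℂ) w f
        nlinarith [norm_nonneg w, norm_nonneg f, norm_nonneg (⟪w, f⟫ : ℂ)]
      have hu2 : (0:ℝ) ≤ ∑' n, ‖u n‖ ^ 2 := tsum_nonneg fun n => sq_nonneg _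
      rw [h2] at h1
      refine h1.trans ?_
      nlinarith [sq_nonneg ‖f‖, mul_le_mul_of_nonneg_left h5 hu2]
    have hframe1 : IsFrame Φd1 := by
      refine ⟨BΦ⁻¹, 2 * (b ^ 2 * BΨ * (‖N‖ + 1) ^ 2) + 2 * (∑' n, ‖u n‖ ^ 2) * ‖w‖ ^ 2 + 1,
        by positivity, ?_, fun f => ?_⟩
      · have h1 : (0:ℝ) ≤ 2 * (b ^ 2 * BΨ * (‖N‖ + 1) ^ 2) := by positivity
        have h2 : (0:ℝ) ≤ 2 * (∑' n, ‖u n‖ ^ 2) * ‖w‖ ^ 2 := by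
          have : 0 ≤ ∑' n, ‖u n‖ ^ 2 := tsum_nonneg (fun n => sq_nonneg ‖u n‖)
          positivity
        linarith
      have hd2 : HasSum (fun n => ⟪Φd1 n, f⟫ • Φ n) f := by
        have h1 := duality2_0 f
        have h2 : HasSum (fun n => (u n * ⟪w, f⟫) • Φ n) 0 := by
          have h3 := hu0.const_smul (⟪w, f⟫ : ℂ)
          rw [smul_zero] at h3
          refine h3.congr_fun fun n => ?_
          rw [smul_smul, mul_comm]
        have h4 := h1.add h2
        rw [add_zero] at h4
        refine h4.congr_fun fun n => ?_
        rw [key1, key0, add_smul]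
      refine ⟨hΦd1sum f, aux_dual_lower hBΦ hΦB (hΦd1sum f) hd2, hΦd1upper f⟩
    have hd1dual : IsDualFrame Φ Φd1 := by
      refine ⟨hframe1, fun f => ⟨?_, ?_⟩⟩
      · have h1 := duality1_0 f
        have h2 : HasSum (fun n => (conj (u n) * ⟪Φ n, f⟫) • w) 0 := by
          have := (hscal' f).smul_const w
          rwa [zero_smul] at this
        have h3 := h1.add h2
        rw [add_zero] at h3
        refine h3.congr_fun fun n => ?_
        simp only [hΦd1, smul_add, smul_smul, mul_comm]
      · have h1 := duality2_0 f
        have h2 : HasSum (fun n => (u n * ⟪w, f⟫) • Φ n) 0 := by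
          have h3 := hu0.const_smul (⟪w, f⟫ : ℂ)
          rw [smul_zero] at h3
          refine h3.congr_fun fun n => ?_
          rw [smul_smul, mul_comm]
        have h4 := h1.add h2
        rw [add_zero] at h4
        refine h4.congr_fun fun n => ?_
        rw [key1, key0, add_smul]
    -- subtract the two instances of the hypothesis at f = w
    have H0 := hyp Φd0 hdual0 w
    have H1 := hyp Φd1 hd1dual w
    have Hsub : HasSum (fun n => (((m n)⁻¹ * (u n * ⟪w, w⟫))) • F n) 0 := by
      have h1 := H1.sub H0
      rw [sub_self] at h1
      refine h1.congr_fun fun n => ?_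
      rw [← sub_smul]
      congr 1
      rw [key1, key0]
      ring
    have hww : (⟪w, w⟫ : ℂ) ≠ 0 := inner_self_ne_zero.mpr hw
    have Hu : HasSum (fun n => ((m n)⁻¹ * u n) • F n) 0 := by
      have h1 := Hsub.const_smul ((⟪w, w⟫ : ℂ)⁻¹)
      rw [smul_zero] at h1
      refine h1.congr_fun fun n => ?_
      rw [smul_smul]
      congr 1
      field_simp
    -- instance at f = M g
    have Hg : HasSum (fun n => ⟪Ψ n, g⟫ • F n) g := by
      have h1 := hyp Φd0 hdual0 (M g)
      rw [hNM] at h1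
      refine h1.congr_fun fun n => ?_
      rw [key0, hNM]
      rw [inv_mul_cancel_left₀ (hmne n)]
    have Hfinal := Hu.add Hg
    rw [zero_add] at Hfinal
    have Hfinal2 : HasSum (fun n => if n = k then (m k)⁻¹ • F k else 0) g := by
      refine Hfinal.congr_fun fun n => ?_
      by_cases hn : n = k
      · subst hn
        rw [← add_smul]
        have : (m n)⁻¹ * u n + ⟪Ψ n, g⟫ = (m n)⁻¹ := by
          rw [hu]
          simp only [if_pos rfl, ↓reduceIte]
          field_simp [hmne n]
          ring
        rw [if_pos rfl, this]
      · rw [← add_smul]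
        have : (m n)⁻¹ * u n + ⟪Ψ n, g⟫ = 0 := by
          rw [hu]
          simp only [if_neg hn]
          field_simp [hmne n]
          ring
        rw [if_neg hn, this, zero_smul]
    have h7 := (hasSum_ite_eq k ((m k)⁻¹ • F k)).unique Hfinal2
    have h8 : F k = m k • g := by
      have h9 := congrArg (fun x => (m k) • x) h7
      simpa [smul_smul, mul_inv_cancel₀ (hmne k)] using h9
    rw [h8, hgdef, ← map_smul]
  · -- backward direction
    intro hF Φd hΦd f
    subst hF
    have h1 := (hΦd.2 f).2
    have h2 := N.hasSum h1
    refine h2.congr_fun fun n => ?_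
    show ((m n)⁻¹ * ⟪Φd n, f⟫) • N (m n • Φ n) = N (⟪Φd n, f⟫ • Φ n)
    rw [map_smul, map_smul, smul_smul]
    congr 1
    rw [mul_comm ((m n)⁻¹) _, mul_assoc, inv_mul_cancel₀ (hmne n), mul_one]
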